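/- For all real numbers θ and θ̂, setting θ̃ = θ − θ̂, and for every real ε with 0 < ε < (2/3)^{3/2}, one has θ̃ · θ̂³ ≤ (1/12 + 3/(4ε⁴)) · θ⁴ − ((4 − 9·ε^{4/3})/4) · θ̃⁴. -/

import Mathlib

theorem stmt_6 (θ θhat ε : ℝ) (hε : 0 < ε) (hε' : ε < ((2 : ℝ) / 3) ^ ((3 : ℝ) / 2)) :
    (θ - θhat) * θhat ^ 3 ≤
      (1 / 12 + 3 / (4 * ε ^ 4)) * θ ^ 4 -
        ((4 - 9 * ε ^ ((4 : ℝ) / 3)) / 4) * (θ - θhat) ^ 4 := by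
  set a : ℝ := ε ^ ((4 : ℝ) / 3) with ha_def
  have ha : 0 < a := Real.rpow_pos_of_pos hε _
  have hcube : a ^ 3 = ε ^ 4 := by
    rw [ha_def, ← Real.rpow_natCast (ε ^ ((4 : ℝ) / 3)) 3, ← Real.rpow_mul hε.le,
      ← Real.rpow_natCast ε 4]
    norm_num
  have hlt : a < 4 / 9 := by
    have h := Real.rpow_lt_rpow hε.le hε' (by norm_num : (0:ℝ) < 4/3)
    rw [← Real.rpow_mul (by norm_num : (0:ℝ) ≤ 2/3)] at h
    norm_num at h
    exact ha_def ▸ h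
  rw [← hcube]
  have h4a : (0:ℝ) < 4 * a ^ 3 := by positivity
  rw [← mul_le_mul_iff_right₀ h4a]
  have hrw : 4 * a ^ 3 * ((1 / 12 + 3 / (4 * a ^ 3)) * θ ^ 4 -
      (4 - 9 * a) / 4 * (θ - θhat) ^ 4) =
      (a ^ 3 / 3) * θ ^ 4 + 3 * θ ^ 4 - a ^ 3 * (4 - 9 * a) * (θ - θhat) ^ 4 := by
    field_simp
    ring
  rw [hrw]
  nlinarith [mul_nonneg (mul_nonneg (pow_pos ha 3).le (sq_nonneg θ))
      (sq_nonneg (6 * (θ - θhat) - θ)),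
    mul_nonneg (sq_nonneg (a * (θ - θhat) - θ)) (sq_nonneg (a * (θ - θhat) + θ)),
    mul_nonneg (sq_nonneg (a * (θ - θhat) - θ)) (sq_nonneg (a * (θ - θhat)))]
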